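/- Let T be a theory, definable over ω, that contains all sentences i ≠ j for distinct natural numbers i, j (numerals), and suppose Pr_T is definable. With ψ, n, t as in Boolos's construction relative to T, the sentence η ≔ (∀v₀)(ψ(v₀,t) ↔ v₀ = n) is true in the standard model ω, but T does not prove η. -/

import Mathlib

namespace Boolos

/-- Terms of the first-order language of arithmetic: variables v₀,v₁,…, 0, successor s, +, ·. -/
inductive Term : Type
  | var : ℕ → Term
  | zero : Term
  | succ : Term → Term
  | add : Term → Term → Term
  | mul : Term → Term → Term
  deriving DecidableEq

/-- Formulas of the first-order language of arithmetic. -/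
inductive Formula : Type
  | eq : Term → Term → Formula
  | lt : Term → Term → Formula
  | not : Formula → Formula
  | and : Formula → Formula → Formula
  | or : Formula → Formula → Formula
  | imp : Formula → Formula → Formula
  | all : ℕ → Formula → Formula
  | ex : ℕ → Formula → Formula
  deriving DecidableEq

/-- The primitive symbols of the language (finitely many apart from the variables). -/
inductive Symbol : Type
  | zero : Symbol
  | succ : Symbol
  | plus : Symbol
  | times : Symbol
  | eqs : Symbol
  | lts : Symbol
  | nots : Symbol
  | ands : Symbol
  | ors : Symbol
  | imps : Symbol
  | alls : Symbol
  | exs : Symbol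
  | var : ℕ → Symbol
  deriving DecidableEq

/-- Gödel numbers of the primitive symbols. -/
def Symbol.code : Symbol → ℕ
  | .zero => 1
  | .succ => 2
  | .plus => 3
  | .times => 4
  | .eqs => 5
  | .lts => 6
  | .nots => 7
  | .ands => 8
  | .ors => 9
  | .imps => 10
  | .alls => 11
  | .exs => 12
  | .var n => 13 + n

/-- The sequence of symbols occurring in a term. -/
def Term.symbols : Term → List Symbol
  | .var i => [.var i]
  | .zero => [.zero]
  | .succ t => .succ :: t.symbols
  | .add t u => t.symbols ++ .plus :: u.symbols
  | .mul t u => t.symbols ++ .times :: u.symbols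

/-- The sequence of symbols occurring in a formula. -/
def Formula.symbols : Formula → List Symbol
  | .eq t u => t.symbols ++ .eqs :: u.symbols
  | .lt t u => t.symbols ++ .lts :: u.symbols
  | .not φ => .nots :: φ.symbols
  | .and φ ψ => φ.symbols ++ .ands :: ψ.symbols
  | .or φ ψ => φ.symbols ++ .ors :: ψ.symbols
  | .imp φ ψ => φ.symbols ++ .imps :: ψ.symbols
  | .all i φ => .alls :: .var i :: φ.symbols
  | .ex i φ => .exs :: .var i :: φ.symbols

/-- |e| : the length (number of symbols) of a term. -/
def Term.length (t : Term) : ℕ := t.symbols.length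

/-- |μ| : the length (number of symbols) of a formula. -/
def Formula.length (φ : Formula) : ℕ := φ.symbols.length

/-- A fixed standard (pairing-based, injective) Gödel numbering of terms. -/
def Term.code : Term → ℕ
  | .var i => Nat.pair 0 i
  | .zero => Nat.pair 1 0
  | .succ t => Nat.pair 2 t.code
  | .add t u => Nat.pair 3 (Nat.pair t.code u.code)
  | .mul t u => Nat.pair 4 (Nat.pair t.code u.code)

/-- ⌜μ⌝ : the Gödel number of a formula. -/
def Formula.gnum : Formula → ℕ
  | .eq t u => Nat.pair 0 (Nat.pair t.code u.code)
  | .lt t u => Nat.pair 1 (Nat.pair t.code u.code)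
  | .not φ => Nat.pair 2 φ.gnum
  | .and φ ψ => Nat.pair 3 (Nat.pair φ.gnum ψ.gnum)
  | .or φ ψ => Nat.pair 4 (Nat.pair φ.gnum ψ.gnum)
  | .imp φ ψ => Nat.pair 5 (Nat.pair φ.gnum ψ.gnum)
  | .all i φ => Nat.pair 6 (Nat.pair i φ.gnum)
  | .ex i φ => Nat.pair 7 (Nat.pair i φ.gnum)

/-- The variables occurring in a term. -/
def Term.varsOf : Term → Finset ℕ
  | .var i => {i}
  | .zero => ∅
  | .succ t => t.varsOf
  | .add t u => t.varsOf ∪ u.varsOf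
  | .mul t u => t.varsOf ∪ u.varsOf

/-- All variables (free or bound) occurring in a formula. -/
def Formula.allVars : Formula → Finset ℕ
  | .eq t u => t.varsOf ∪ u.varsOf
  | .lt t u => t.varsOf ∪ u.varsOf
  | .not φ => φ.allVars
  | .and φ ψ => φ.allVars ∪ ψ.allVars
  | .or φ ψ => φ.allVars ∪ ψ.allVars
  | .imp φ ψ => φ.allVars ∪ ψ.allVars
  | .all i φ => insert i φ.allVars
  | .ex i φ => insert i φ.allVars

/-- The free variables of a formula. -/
def Formula.freeVars : Formula → Finset ℕ
  | .eq t u => t.varsOf ∪ u.varsOf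
  | .lt t u => t.varsOf ∪ u.varsOf
  | .not φ => φ.freeVars
  | .and φ ψ => φ.freeVars ∪ ψ.freeVars
  | .or φ ψ => φ.freeVars ∪ ψ.freeVars
  | .imp φ ψ => φ.freeVars ∪ ψ.freeVars
  | .all i φ => φ.freeVars.erase i
  | .ex i φ => φ.freeVars.erase i

/-- Substitution of a term for a variable in a term. -/
def Term.subst : Term → ℕ → Term → Term
  | .var i, x, s => if i = x then s else .var i
  | .zero, _, _ => .zero
  | .succ t, x, s => .succ (t.subst x s)
  | .add t u, x, s => .add (t.subst x s) (u.subst x s)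
  | .mul t u, x, s => .mul (t.subst x s) (u.subst x s)

/-- Substitution of a term for the free occurrences of a variable in a formula. -/
def Formula.subst : Formula → ℕ → Term → Formula
  | .eq t u, x, s => .eq (t.subst x s) (u.subst x s)
  | .lt t u, x, s => .lt (t.subst x s) (u.subst x s)
  | .not φ, x, s => .not (φ.subst x s)
  | .and φ ψ, x, s => .and (φ.subst x s) (ψ.subst x s)
  | .or φ ψ, x, s => .or (φ.subst x s) (ψ.subst x s)
  | .imp φ ψ, x, s => .imp (φ.subst x s) (ψ.subst x s)
  | .all i φ, x, s => if i = x then .all i φ else .all i (φ.subst x s)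
  | .ex i φ, x, s => if i = x then .ex i φ else .ex i (φ.subst x s)

/-- The number of occurrences of a variable in a term. -/
def Term.countOcc : Term → ℕ → ℕ
  | .var i, x => if i = x then 1 else 0
  | .zero, _ => 0
  | .succ t, x => t.countOcc x
  | .add t u, x => t.countOcc x + u.countOcc x
  | .mul t u, x => t.countOcc x + u.countOcc x

/-- The number of free occurrences of a variable in a formula. -/
def Formula.countFreeOcc : Formula → ℕ → ℕ
  | .eq t u, x => t.countOcc x + u.countOcc x
  | .lt t u, x => t.countOcc x + u.countOcc x
  | .not φ, x => φ.countFreeOcc x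
  | .and φ ψ, x => φ.countFreeOcc x + ψ.countFreeOcc x
  | .or φ ψ, x => φ.countFreeOcc x + ψ.countFreeOcc x
  | .imp φ ψ, x => φ.countFreeOcc x + ψ.countFreeOcc x
  | .all i φ, x => if i = x then 0 else φ.countFreeOcc x
  | .ex i φ, x => if i = x then 0 else φ.countFreeOcc x

/-- The numeral s s … s 0 for a natural number. -/
def numeral : ℕ → Term
  | 0 => .zero
  | n + 1 => .succ (numeral n)

/-- Structures for the language of arithmetic. -/
structure Struct where
  carrier : Type
  zero : carrier
  succ : carrier → carrier
  add : carrier → carrier → carrier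
  mul : carrier → carrier → carrier
  lt : carrier → carrier → Prop

/-- The value of a term in a structure under an assignment. -/
def Term.val (M : Struct) (v : ℕ → M.carrier) : Term → M.carrier
  | .var i => v i
  | .zero => M.zero
  | .succ t => M.succ (Term.val M v t)
  | .add t u => M.add (Term.val M v t) (Term.val M v u)
  | .mul t u => M.mul (Term.val M v t) (Term.val M v u)

/-- Satisfaction of a formula in a structure under an assignment. -/
def Formula.Realize (M : Struct) : (ℕ → M.carrier) → Formula → Prop
  | v, .eq t u => Term.val M v t = Term.val M v u
  | v, .lt t u => M.lt (Term.val M v t) (Term.val M v u)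
  | v, .not φ => ¬ Formula.Realize M v φ
  | v, .and φ ψ => Formula.Realize M v φ ∧ Formula.Realize M v ψ
  | v, .or φ ψ => Formula.Realize M v φ ∨ Formula.Realize M v ψ
  | v, .imp φ ψ => Formula.Realize M v φ → Formula.Realize M v ψ
  | v, .all i φ => ∀ a : M.carrier, Formula.Realize M (Function.update v i a) φ
  | v, .ex i φ => ∃ a : M.carrier, Formula.Realize M (Function.update v i a) φ

/-- ω : the standard model of arithmetic. -/
@[reducible] def stdModel : Struct :=
  { carrier := ℕ, zero := 0, succ := Nat.succ, add := (· + ·), mul := (· * ·),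
    lt := (· < ·) }

/-- A formula is true if it holds in the standard model ω (under every assignment). -/
def IsTrue (φ : Formula) : Prop := ∀ v : ℕ → ℕ, Formula.Realize stdModel v φ

/-- The value of a (closed) term in the standard model ω. -/
def Term.valNat (t : Term) : ℕ := Term.val stdModel (fun _ => 0) t

/-- A sentence is a formula with no free variables. -/
def Formula.IsSentence (φ : Formula) : Prop := φ.freeVars = ∅

/-- Provability from a theory; by the Gödel completeness theorem, identified with
semantic consequence. -/
def Proves (T : Set Formula) (φ : Formula) : Prop :=
  ∀ (M : Struct) (v : ℕ → M.carrier),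
    (∀ ψ ∈ T, Formula.Realize M v ψ) → Formula.Realize M v φ

/-- Consistency: no formula is both provable and refutable. -/
def Consistent (T : Set Formula) : Prop :=
  ¬ ∃ φ : Formula, Proves T φ ∧ Proves T (.not φ)

/-- The biconditional, as an abbreviation. -/
def Formula.iffF (φ ψ : Formula) : Formula := .and (.imp φ ψ) (.imp ψ φ)

def v0 : Term := .var 0
def v1 : Term := .var 1
def v2 : Term := .var 2

/-- The axioms of Robinson arithmetic Q (with < defined as usual). -/
def QAxioms : Set Formula :=
  { .all 0 (.all 1 (.imp (.eq (.succ v0) (.succ v1)) (.eq v0 v1))),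
    .all 0 (.not (.eq (.succ v0) .zero)),
    .all 0 (.imp (.not (.eq v0 .zero)) (.ex 1 (.eq v0 (.succ v1)))),
    .all 0 (.eq (.add v0 .zero) v0),
    .all 0 (.all 1 (.eq (.add v0 (.succ v1)) (.succ (.add v0 v1)))),
    .all 0 (.eq (.mul v0 .zero) .zero),
    .all 0 (.all 1 (.eq (.mul v0 (.succ v1)) (.add (.mul v0 v1) v0))),
    .all 0 (.all 1 (Formula.iffF (.lt v0 v1) (.ex 2 (.eq (.add v2 (.succ v0)) v1)))) }

/-- Pr_S : the set of Gödel numbers of sentences provable in S. -/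
def PrSet (T : Set Formula) : Set ℕ :=
  {m | ∃ σ : Formula, σ.IsSentence ∧ Proves T σ ∧ m = σ.gnum}

/-- A formula μ with at most the free variable v₀ names the number i in T
if T ⊢ (∀v₀)(μ(v₀) ↔ v₀ = i). -/
def Names (T : Set Formula) (μ : Formula) (i : ℕ) : Prop :=
  μ.freeVars ⊆ {0} ∧ Proves T (.all 0 (Formula.iffF μ (.eq v0 (numeral i))))

/-- i is named in T by some formula of length < m. -/
def Nameable (T : Set Formula) (m i : ℕ) : Prop :=
  ∃ μ : Formula, μ.length < m ∧ Names T μ i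

/-- φ(v₀) defines the set A in the standard model ω. -/
def DefinesSet (φ : Formula) (A : Set ℕ) : Prop :=
  φ.freeVars ⊆ {0} ∧ ∀ i : ℕ, i ∈ A ↔ IsTrue (φ.subst 0 (numeral i))

/-- A set of natural numbers is definable (in ω). -/
def Definable (A : Set ℕ) : Prop := ∃ φ : Formula, DefinesSet φ A

/-- φ(v₀,v₁) defines the binary relation R in the standard model ω. -/
def DefinesRel (φ : Formula) (R : ℕ → ℕ → Prop) : Prop :=
  φ.freeVars ⊆ {0, 1} ∧
    ∀ i j : ℕ, R i j ↔ IsTrue ((φ.subst 0 (numeral i)).subst 1 (numeral j))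

/-- The relation B of Boolos's construction: (i,j) ∈ B iff some formula μ with at most
the free variable v₀, with ⌜μ⌝ < g(j) and |μ| < j, names i. -/
def BRel (T : Set Formula) (g : ℕ → ℕ) (i j : ℕ) : Prop :=
  ∃ μ : Formula, μ.gnum < g j ∧ μ.length < j ∧ Names T μ i

/-- g is a recursive function bounding Gödel numbers in terms of length, as in the
construction: whenever all variables of μ are among the first j ones and |μ| < j,
we have ⌜μ⌝ < g(j). -/
def GoodBound (g : ℕ → ℕ) : Prop :=
  Computable g ∧
    ∀ (μ : Formula) (j : ℕ), μ.allVars ⊆ Finset.range j → μ.length < j → μ.gnum < g j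

/-- ψ(v₀,v₁) ≔ ¬φ(v₀,v₁) ∧ (∀v₂ < v₀) φ(v₂,v₁). -/
def psiOf (φ : Formula) : Formula :=
  .and (.not φ) (.all 2 (.imp (.lt v2 v0) (φ.subst 0 v2)))

/-- The closed term t ≔ 10·(k·k). -/
def tTerm (k : ℕ) : Term := .mul (numeral 10) (.mul (numeral k) (numeral k))

/-! ### Auxiliary lemmas -/

lemma Term.val_congr (M : Struct) (t : Term) {v w : ℕ → M.carrier}
    (h : ∀ i ∈ t.varsOf, v i = w i) : Term.val M v t = Term.val M w t := by
  induction t with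
  | var i => exact h i (by simp [Term.varsOf])
  | zero => rfl
  | succ t ih =>
      simp only [Term.val]
      rw [ih (fun i hi => h i (by simpa [Term.varsOf] using hi))]
  | add t u iht ihu =>
      simp only [Term.val]
      rw [iht (fun i hi => h i (by simp [Term.varsOf]; exact Or.inl hi)),
          ihu (fun i hi => h i (by simp [Term.varsOf]; exact Or.inr hi))]
  | mul t u iht ihu =>
      simp only [Term.val]
      rw [iht (fun i hi => h i (by simp [Term.varsOf]; exact Or.inl hi)),
          ihu (fun i hi => h i (by simp [Term.varsOf]; exact Or.inr hi))]

lemma Formula.realize_congr (M : Struct) (φ : Formula) :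
    ∀ {v w : ℕ → M.carrier}, (∀ i ∈ φ.freeVars, v i = w i) →
      (Formula.Realize M v φ ↔ Formula.Realize M w φ) := by
  induction φ with
  | eq t u =>
      intro v w h
      simp only [Formula.Realize]
      rw [Term.val_congr M t (fun i hi => h i (by simp [Formula.freeVars]; exact Or.inl hi)),
          Term.val_congr M u (fun i hi => h i (by simp [Formula.freeVars]; exact Or.inr hi))]
  | lt t u =>
      intro v w h
      simp only [Formula.Realize]
      rw [Term.val_congr M t (fun i hi => h i (by simp [Formula.freeVars]; exact Or.inl hi)),
          Term.val_congr M u (fun i hi => h i (by simp [Formula.freeVars]; exact Or.inr hi))]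
  | not φ ih =>
      intro v w h
      simp only [Formula.Realize]
      rw [ih (fun i hi => h i (by simpa [Formula.freeVars] using hi))]
  | and φ ψ ihφ ihψ =>
      intro v w h
      simp only [Formula.Realize]
      rw [ihφ (fun i hi => h i (by simp [Formula.freeVars]; exact Or.inl hi)),
          ihψ (fun i hi => h i (by simp [Formula.freeVars]; exact Or.inr hi))]
  | or φ ψ ihφ ihψ =>
      intro v w h
      simp only [Formula.Realize]
      rw [ihφ (fun i hi => h i (by simp [Formula.freeVars]; exact Or.inl hi)),
          ihψ (fun i hi => h i (by simp [Formula.freeVars]; exact Or.inr hi))]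
  | imp φ ψ ihφ ihψ =>
      intro v w h
      simp only [Formula.Realize]
      rw [ihφ (fun i hi => h i (by simp [Formula.freeVars]; exact Or.inl hi)),
          ihψ (fun i hi => h i (by simp [Formula.freeVars]; exact Or.inr hi))]
  | all i φ ih =>
      intro v w h
      simp only [Formula.Realize]
      apply forall_congr'
      intro a
      apply ih
      intro j hj
      rcases eq_or_ne j i with rfl | hne
      · simp
      · rw [Function.update_of_ne hne, Function.update_of_ne hne]
        exact h j (by simp [Formula.freeVars, Finset.mem_erase]; exact ⟨hne, hj⟩)
  | ex i φ ih =>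
      intro v w h
      simp only [Formula.Realize]
      apply exists_congr
      intro a
      apply ih
      intro j hj
      rcases eq_or_ne j i with rfl | hne
      · simp
      · rw [Function.update_of_ne hne, Function.update_of_ne hne]
        exact h j (by simp [Formula.freeVars, Finset.mem_erase]; exact ⟨hne, hj⟩)

lemma Term.val_subst (M : Struct) (v : ℕ → M.carrier) (t : Term) (x : ℕ) (s : Term) :
    Term.val M v (t.subst x s) = Term.val M (Function.update v x (Term.val M v s)) t := by
  induction t with
  | var i =>
      by_cases hix : i = x
      · subst hix; simp [Term.subst, Term.val]
      · simp [Term.subst, hix, Term.val, Function.update_of_ne hix]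
  | zero => rfl
  | succ t ih => simp [Term.subst, Term.val, ih]
  | add t u iht ihu => simp [Term.subst, Term.val, iht, ihu]
  | mul t u iht ihu => simp [Term.subst, Term.val, iht, ihu]

lemma Formula.realize_subst (M : Struct) (φ : Formula) (x : ℕ) (s : Term)
    (hs : ∀ j ∈ s.varsOf, j ∉ φ.allVars) :
    ∀ v : ℕ → M.carrier,
      Formula.Realize M v (φ.subst x s) ↔
        Formula.Realize M (Function.update v x (Term.val M v s)) φ := by
  induction φ with
  | eq t u => intro v; simp [Formula.subst, Formula.Realize, Term.val_subst]
  | lt t u => intro v; simp [Formula.subst, Formula.Realize, Term.val_subst]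
  | not φ ih =>
      intro v
      simp only [Formula.subst, Formula.Realize]
      rw [ih (fun j hj => hs j hj) v]
  | and φ ψ ihφ ihψ =>
      intro v
      simp only [Formula.subst, Formula.Realize]
      rw [ihφ (fun j hj hm => hs j hj (by simp [Formula.allVars]; exact Or.inl hm)) v,
          ihψ (fun j hj hm => hs j hj (by simp [Formula.allVars]; exact Or.inr hm)) v]
  | or φ ψ ihφ ihψ =>
      intro v
      simp only [Formula.subst, Formula.Realize]
      rw [ihφ (fun j hj hm => hs j hj (by simp [Formula.allVars]; exact Or.inl hm)) v,
          ihψ (fun j hj hm => hs j hj (by simp [Formula.allVars]; exact Or.inr hm)) v]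
  | imp φ ψ ihφ ihψ =>
      intro v
      simp only [Formula.subst, Formula.Realize]
      rw [ihφ (fun j hj hm => hs j hj (by simp [Formula.allVars]; exact Or.inl hm)) v,
          ihψ (fun j hj hm => hs j hj (by simp [Formula.allVars]; exact Or.inr hm)) v]
  | all i φ ih =>
      intro v
      by_cases hix : i = x
      · subst hix
        simp only [Formula.subst, if_pos rfl, Formula.Realize]
        apply forall_congr'
        intro a
        rw [Function.update_idem]
      · simp only [Formula.subst, if_neg hix, Formula.Realize]
        apply forall_congr'
        intro a
        have hs' : ∀ j ∈ s.varsOf, j ∉ φ.allVars :=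
          fun j hj hm => hs j hj (by simp [Formula.allVars]; exact Or.inr hm)
        rw [ih hs' (Function.update v i a)]
        have hvs : Term.val M (Function.update v i a) s = Term.val M v s := by
          apply Term.val_congr
          intro j hj
          have hji : j ≠ i := fun e => hs j hj (by simp [Formula.allVars, e])
          exact Function.update_of_ne hji a v
        rw [hvs, Function.update_comm hix]
  | ex i φ ih =>
      intro v
      by_cases hix : i = x
      · subst hix
        simp only [Formula.subst, if_pos rfl, Formula.Realize]
        apply exists_congr
        intro a
        rw [Function.update_idem]
      · simp only [Formula.subst, if_neg hix, Formula.Realize]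
        apply exists_congr
        intro a
        have hs' : ∀ j ∈ s.varsOf, j ∉ φ.allVars :=
          fun j hj hm => hs j hj (by simp [Formula.allVars]; exact Or.inr hm)
        rw [ih hs' (Function.update v i a)]
        have hvs : Term.val M (Function.update v i a) s = Term.val M v s := by
          apply Term.val_congr
          intro j hj
          have hji : j ≠ i := fun e => hs j hj (by simp [Formula.allVars, e])
          exact Function.update_of_ne hji a v
        rw [hvs, Function.update_comm hix]
lemma Term.varsOf_subst (t : Term) (x : ℕ) (s : Term) :
    ∀ j ∈ (t.subst x s).varsOf, j ∈ t.varsOf.erase x ∪ s.varsOf := by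
  induction t with
  | var i =>
      intro j hj
      by_cases hix : i = x
      · subst hix; simp [Term.subst] at hj; simp [Term.varsOf, hj]
      · simp [Term.subst, hix, Term.varsOf] at hj
        simp [Term.varsOf, hj, hix]
  | zero => intro j hj; simp [Term.subst, Term.varsOf] at hj
  | succ t ih => intro j hj; exact ih j hj
  | add t u iht ihu =>
      intro j hj
      simp only [Term.subst, Term.varsOf, Finset.mem_union] at hj
      rcases hj with h | h
      · have := iht j h; simp [Term.varsOf, Finset.mem_union, Finset.mem_erase] at this ⊢; tauto
      · have := ihu j h; simp [Term.varsOf, Finset.mem_union, Finset.mem_erase] at this ⊢; tauto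
  | mul t u iht ihu =>
      intro j hj
      simp only [Term.subst, Term.varsOf, Finset.mem_union] at hj
      rcases hj with h | h
      · have := iht j h; simp [Term.varsOf, Finset.mem_union, Finset.mem_erase] at this ⊢; tauto
      · have := ihu j h; simp [Term.varsOf, Finset.mem_union, Finset.mem_erase] at this ⊢; tauto

lemma Formula.freeVars_subst (φ : Formula) (x : ℕ) (s : Term) :
    ∀ j ∈ (φ.subst x s).freeVars, j ∈ φ.freeVars.erase x ∪ s.varsOf := by
  induction φ with
  | eq t u =>
      intro j hj
      simp only [Formula.subst, Formula.freeVars, Finset.mem_union] at hj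
      rcases hj with h | h
      · have := Term.varsOf_subst t x s j h
        simp [Formula.freeVars, Finset.mem_union, Finset.mem_erase] at this ⊢; tauto
      · have := Term.varsOf_subst u x s j h
        simp [Formula.freeVars, Finset.mem_union, Finset.mem_erase] at this ⊢; tauto
  | lt t u =>
      intro j hj
      simp only [Formula.subst, Formula.freeVars, Finset.mem_union] at hj
      rcases hj with h | h
      · have := Term.varsOf_subst t x s j h
        simp [Formula.freeVars, Finset.mem_union, Finset.mem_erase] at this ⊢; tauto
      · have := Term.varsOf_subst u x s j h
        simp [Formula.freeVars, Finset.mem_union, Finset.mem_erase] at this ⊢; tauto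
  | not φ ih => intro j hj; exact ih j hj
  | and φ ψ ihφ ihψ =>
      intro j hj
      simp only [Formula.subst, Formula.freeVars, Finset.mem_union] at hj
      rcases hj with h | h
      · have := ihφ j h; simp [Formula.freeVars, Finset.mem_union, Finset.mem_erase] at this ⊢; tauto
      · have := ihψ j h; simp [Formula.freeVars, Finset.mem_union, Finset.mem_erase] at this ⊢; tauto
  | or φ ψ ihφ ihψ =>
      intro j hj
      simp only [Formula.subst, Formula.freeVars, Finset.mem_union] at hj
      rcases hj with h | h
      · have := ihφ j h; simp [Formula.freeVars, Finset.mem_union, Finset.mem_erase] at this ⊢; tauto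
      · have := ihψ j h; simp [Formula.freeVars, Finset.mem_union, Finset.mem_erase] at this ⊢; tauto
  | imp φ ψ ihφ ihψ =>
      intro j hj
      simp only [Formula.subst, Formula.freeVars, Finset.mem_union] at hj
      rcases hj with h | h
      · have := ihφ j h; simp [Formula.freeVars, Finset.mem_union, Finset.mem_erase] at this ⊢; tauto
      · have := ihψ j h; simp [Formula.freeVars, Finset.mem_union, Finset.mem_erase] at this ⊢; tauto
  | all i φ ih =>
      intro j hj
      by_cases hix : i = x
      · subst hix
        simp only [Formula.subst, if_pos rfl, ↓reduceIte, Formula.freeVars, Finset.mem_erase] at hj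
        simp [Formula.freeVars, Finset.mem_union, Finset.mem_erase]
        tauto
      · simp only [Formula.subst, if_neg hix, Formula.freeVars, Finset.mem_erase] at hj
        obtain ⟨hji, hmem⟩ := hj
        have := ih j hmem
        simp [Formula.freeVars, Finset.mem_union, Finset.mem_erase] at this ⊢
        tauto
  | ex i φ ih =>
      intro j hj
      by_cases hix : i = x
      · subst hix
        simp only [Formula.subst, if_pos rfl, ↓reduceIte, Formula.freeVars, Finset.mem_erase] at hj
        simp [Formula.freeVars, Finset.mem_union, Finset.mem_erase]
        tauto
      · simp only [Formula.subst, if_neg hix, Formula.freeVars, Finset.mem_erase] at hj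
        obtain ⟨hji, hmem⟩ := hj
        have := ih j hmem
        simp [Formula.freeVars, Finset.mem_union, Finset.mem_erase] at this ⊢
        tauto

lemma Term.length_subst (t : Term) (x : ℕ) (s : Term) :
    (t.subst x s).length ≤ t.length + t.countOcc x * s.length := by
  induction t with
  | var i =>
      by_cases hix : i = x <;>
        simp [Term.subst, hix, Term.length, Term.symbols, Term.countOcc]
  | zero => simp [Term.subst, Term.length, Term.symbols, Term.countOcc]
  | succ t ih => simp only [Term.subst, Term.length, Term.symbols, List.length_cons,
      Term.countOcc] at *; omega
  | add t u iht ihu =>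
      simp only [Term.subst, Term.length, Term.symbols, List.length_append,
        List.length_cons, Term.countOcc, Nat.add_mul] at *
      omega
  | mul t u iht ihu =>
      simp only [Term.subst, Term.length, Term.symbols, List.length_append,
        List.length_cons, Term.countOcc, Nat.add_mul] at *
      omega

lemma Formula.length_subst (φ : Formula) (x : ℕ) (s : Term) :
    (φ.subst x s).length ≤ φ.length + φ.countFreeOcc x * s.length := by
  induction φ with
  | eq t u =>
      have h1 := Term.length_subst t x s
      have h2 := Term.length_subst u x s
      simp only [Formula.subst, Formula.length, Formula.symbols, List.length_append,
        List.length_cons, Formula.countFreeOcc, Nat.add_mul, Term.length] at *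
      omega
  | lt t u =>
      have h1 := Term.length_subst t x s
      have h2 := Term.length_subst u x s
      simp only [Formula.subst, Formula.length, Formula.symbols, List.length_append,
        List.length_cons, Formula.countFreeOcc, Nat.add_mul, Term.length] at *
      omega
  | not φ ih =>
      simp only [Formula.subst, Formula.length, Formula.symbols, List.length_cons,
        Formula.countFreeOcc] at *
      omega
  | and φ ψ ihφ ihψ =>
      simp only [Formula.subst, Formula.length, Formula.symbols, List.length_append,
        List.length_cons, Formula.countFreeOcc, Nat.add_mul] at *
      omega
  | or φ ψ ihφ ihψ =>
      simp only [Formula.subst, Formula.length, Formula.symbols, List.length_append,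
        List.length_cons, Formula.countFreeOcc, Nat.add_mul] at *
      omega
  | imp φ ψ ihφ ihψ =>
      simp only [Formula.subst, Formula.length, Formula.symbols, List.length_append,
        List.length_cons, Formula.countFreeOcc, Nat.add_mul] at *
      omega
  | all i φ ih =>
      by_cases hix : i = x
      · simp [Formula.subst, hix, Formula.countFreeOcc]
      · simp only [Formula.subst, if_neg hix, Formula.length, Formula.symbols,
          List.length_cons, Formula.countFreeOcc, if_neg hix] at *
        omega
  | ex i φ ih =>
      by_cases hix : i = x
      · simp [Formula.subst, hix, Formula.countFreeOcc]
      · simp only [Formula.subst, if_neg hix, Formula.length, Formula.symbols,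
          List.length_cons, Formula.countFreeOcc, if_neg hix] at *
        omega

lemma numeral_varsOf (m : ℕ) : (numeral m).varsOf = ∅ := by
  induction m with
  | zero => simp [numeral, Term.varsOf]
  | succ m ih => simp [numeral, Term.varsOf, ih]

lemma numeral_length (m : ℕ) : (numeral m).length = m + 1 := by
  induction m with
  | zero => simp [numeral, Term.length, Term.symbols]
  | succ m ih => simp only [numeral, Term.length, Term.symbols, List.length_cons] at *; omega

lemma numeral_val (v : ℕ → ℕ) (m : ℕ) : Term.val stdModel v (numeral m) = m := by
  induction m with
  | zero => rfl
  | succ m ih => simp [numeral, Term.val, ih, stdModel]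

lemma tTerm_varsOf (k : ℕ) : (tTerm k).varsOf = ∅ := by
  simp [tTerm, Term.varsOf, numeral_varsOf]

lemma tTerm_length (k : ℕ) : (tTerm k).length = 2 * k + 15 := by
  have h10 := numeral_length 10
  have hk := numeral_length k
  simp only [tTerm, Term.length, Term.symbols, List.length_append, List.length_cons] at *
  omega

lemma tTerm_val (v : ℕ → ℕ) (k : ℕ) : Term.val stdModel v (tTerm k) = 10 * (k * k) := by
  simp [tTerm, Term.val, numeral_val, stdModel]

lemma Term.length_pos (t : Term) : 1 ≤ t.length := by
  induction t with
  | var i => simp [Term.length, Term.symbols]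
  | zero => simp [Term.length, Term.symbols]
  | succ t ih => simp [Term.length, Term.symbols]
  | add t u iht ihu => simp only [Term.length, Term.symbols, List.length_append,
      List.length_cons] at *; omega
  | mul t u iht ihu => simp only [Term.length, Term.symbols, List.length_append,
      List.length_cons] at *; omega

lemma Formula.length_pos (φ : Formula) : 1 ≤ φ.length := by
  induction φ with
  | eq t u => simp only [Formula.length, Formula.symbols, List.length_append,
      List.length_cons]; omega
  | lt t u => simp only [Formula.length, Formula.symbols, List.length_append,
      List.length_cons]; omega
  | not φ ih => simp [Formula.length, Formula.symbols]
  | and φ ψ ihφ ihψ => simp only [Formula.length, Formula.symbols, List.length_append,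
      List.length_cons] at *; omega
  | or φ ψ ihφ ihψ => simp only [Formula.length, Formula.symbols, List.length_append,
      List.length_cons] at *; omega
  | imp φ ψ ihφ ihψ => simp only [Formula.length, Formula.symbols, List.length_append,
      List.length_cons] at *; omega
  | all i φ ih => simp [Formula.length, Formula.symbols]
  | ex i φ ih => simp [Formula.length, Formula.symbols]

lemma psiOf_length (φ : Formula) :
    (psiOf φ).length = φ.length + (φ.subst 0 v2).length + 8 := by
  simp only [psiOf, Formula.length, Formula.symbols, Term.symbols, v0, v2,
    List.length_append, List.length_cons, List.length_nil]
  omega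

lemma Term.card_varsOf_le (t : Term) : t.varsOf.card ≤ t.length := by
  induction t with
  | var i => simp [Term.varsOf, Term.length, Term.symbols]
  | zero => simp [Term.varsOf, Term.length, Term.symbols]
  | succ t ih => simpa [Term.varsOf, Term.length, Term.symbols] using Nat.le_succ_of_le ih
  | add t u iht ihu =>
      have := Finset.card_union_le t.varsOf u.varsOf
      simp only [Term.varsOf, Term.length, Term.symbols, List.length_append,
        List.length_cons] at *
      omega
  | mul t u iht ihu =>
      have := Finset.card_union_le t.varsOf u.varsOf
      simp only [Term.varsOf, Term.length, Term.symbols, List.length_append,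
        List.length_cons] at *
      omega

lemma Formula.card_allVars_le (φ : Formula) : φ.allVars.card ≤ φ.length := by
  induction φ with
  | eq t u =>
      have := Finset.card_union_le t.varsOf u.varsOf
      have h1 := Term.card_varsOf_le t
      have h2 := Term.card_varsOf_le u
      simp only [Formula.allVars, Formula.length, Formula.symbols, List.length_append,
        List.length_cons, Term.length] at *
      omega
  | lt t u =>
      have := Finset.card_union_le t.varsOf u.varsOf
      have h1 := Term.card_varsOf_le t
      have h2 := Term.card_varsOf_le u
      simp only [Formula.allVars, Formula.length, Formula.symbols, List.length_append,
        List.length_cons, Term.length] at *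
      omega
  | not φ ih => simpa [Formula.allVars, Formula.length, Formula.symbols] using Nat.le_succ_of_le ih
  | and φ ψ ihφ ihψ =>
      have := Finset.card_union_le φ.allVars ψ.allVars
      simp only [Formula.allVars, Formula.length, Formula.symbols, List.length_append,
        List.length_cons] at *
      omega
  | or φ ψ ihφ ihψ =>
      have := Finset.card_union_le φ.allVars ψ.allVars
      simp only [Formula.allVars, Formula.length, Formula.symbols, List.length_append,
        List.length_cons] at *
      omega
  | imp φ ψ ihφ ihψ =>
      have := Finset.card_union_le φ.allVars ψ.allVars
      simp only [Formula.allVars, Formula.length, Formula.symbols, List.length_append,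
        List.length_cons] at *
      omega
  | all i φ ih =>
      have := Finset.card_insert_le i φ.allVars
      simp only [Formula.allVars, Formula.length, Formula.symbols, List.length_cons] at *
      omega
  | ex i φ ih =>
      have := Finset.card_insert_le i φ.allVars
      simp only [Formula.allVars, Formula.length, Formula.symbols, List.length_cons] at *
      omega
/-- Renaming of all variables in a term. -/
def Term.rename (π : ℕ → ℕ) : Term → Term
  | .var i => .var (π i)
  | .zero => .zero
  | .succ t => .succ (t.rename π)
  | .add t u => .add (t.rename π) (u.rename π)
  | .mul t u => .mul (t.rename π) (u.rename π)

/-- Renaming of all variables (free and bound) in a formula. -/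
def Formula.rename (π : ℕ → ℕ) : Formula → Formula
  | .eq t u => .eq (t.rename π) (u.rename π)
  | .lt t u => .lt (t.rename π) (u.rename π)
  | .not φ => .not (φ.rename π)
  | .and φ ψ => .and (φ.rename π) (ψ.rename π)
  | .or φ ψ => .or (φ.rename π) (ψ.rename π)
  | .imp φ ψ => .imp (φ.rename π) (ψ.rename π)
  | .all i φ => .all (π i) (φ.rename π)
  | .ex i φ => .ex (π i) (φ.rename π)

lemma Term.length_rename (π : ℕ → ℕ) (t : Term) : (t.rename π).length = t.length := by
  induction t with
  | var i => rfl
  | zero => rfl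
  | succ t ih => simp only [Term.rename, Term.length, Term.symbols, List.length_cons] at *; omega
  | add t u iht ihu => simp only [Term.rename, Term.length, Term.symbols,
      List.length_append, List.length_cons] at *; omega
  | mul t u iht ihu => simp only [Term.rename, Term.length, Term.symbols,
      List.length_append, List.length_cons] at *; omega

lemma Formula.length_rename (π : ℕ → ℕ) (φ : Formula) : (φ.rename π).length = φ.length := by
  induction φ with
  | eq t u => simp only [Formula.rename, Formula.length, Formula.symbols,
      List.length_append, List.length_cons]
              rw [show (Term.rename π t).symbols.length = t.symbols.length from Term.length_rename π t,
                  show (Term.rename π u).symbols.length = u.symbols.length from Term.length_rename π u]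
  | lt t u => simp only [Formula.rename, Formula.length, Formula.symbols,
      List.length_append, List.length_cons]
              rw [show (Term.rename π t).symbols.length = t.symbols.length from Term.length_rename π t,
                  show (Term.rename π u).symbols.length = u.symbols.length from Term.length_rename π u]
  | not φ ih => simp only [Formula.rename, Formula.length, Formula.symbols,
      List.length_cons] at *; omega
  | and φ ψ ihφ ihψ => simp only [Formula.rename, Formula.length, Formula.symbols,
      List.length_append, List.length_cons] at *; omega
  | or φ ψ ihφ ihψ => simp only [Formula.rename, Formula.length, Formula.symbols,
      List.length_append, List.length_cons] at *; omega
  | imp φ ψ ihφ ihψ => simp only [Formula.rename, Formula.length, Formula.symbols,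
      List.length_append, List.length_cons] at *; omega
  | all i φ ih => simp only [Formula.rename, Formula.length, Formula.symbols,
      List.length_cons] at *; omega
  | ex i φ ih => simp only [Formula.rename, Formula.length, Formula.symbols,
      List.length_cons] at *; omega

lemma Term.val_rename (M : Struct) (v : ℕ → M.carrier) (π : ℕ → ℕ) (t : Term) :
    Term.val M v (t.rename π) = Term.val M (v ∘ π) t := by
  induction t with
  | var i => rfl
  | zero => rfl
  | succ t ih => simp [Term.rename, Term.val, ih]
  | add t u iht ihu => simp [Term.rename, Term.val, iht, ihu]
  | mul t u iht ihu => simp [Term.rename, Term.val, iht, ihu]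

lemma Formula.realize_rename (M : Struct) (π : ℕ → ℕ) (hπ : Function.Injective π)
    (φ : Formula) : ∀ v : ℕ → M.carrier,
      Formula.Realize M v (φ.rename π) ↔ Formula.Realize M (v ∘ π) φ := by
  induction φ with
  | eq t u => intro v; simp [Formula.rename, Formula.Realize, Term.val_rename]
  | lt t u => intro v; simp [Formula.rename, Formula.Realize, Term.val_rename]
  | not φ ih => intro v; simp only [Formula.rename, Formula.Realize]; rw [ih v]
  | and φ ψ ihφ ihψ => intro v; simp only [Formula.rename, Formula.Realize]; rw [ihφ v, ihψ v]
  | or φ ψ ihφ ihψ => intro v; simp only [Formula.rename, Formula.Realize]; rw [ihφ v, ihψ v]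
  | imp φ ψ ihφ ihψ => intro v; simp only [Formula.rename, Formula.Realize]; rw [ihφ v, ihψ v]
  | all i φ ih =>
      intro v
      simp only [Formula.rename, Formula.Realize]
      apply forall_congr'
      intro a
      rw [ih (Function.update v (π i) a)]
      have : Function.update v (π i) a ∘ π = Function.update (v ∘ π) i a := by
        funext x
        rcases eq_or_ne x i with rfl | hne
        · simp [Function.comp]
        · have : π x ≠ π i := fun e => hne (hπ e)
          simp [Function.comp, Function.update_of_ne this, Function.update_of_ne hne]
      rw [this]
  | ex i φ ih =>
      intro v
      simp only [Formula.rename, Formula.Realize]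
      apply exists_congr
      intro a
      rw [ih (Function.update v (π i) a)]
      have : Function.update v (π i) a ∘ π = Function.update (v ∘ π) i a := by
        funext x
        rcases eq_or_ne x i with rfl | hne
        · simp [Function.comp]
        · have : π x ≠ π i := fun e => hne (hπ e)
          simp [Function.comp, Function.update_of_ne this, Function.update_of_ne hne]
      rw [this]

lemma Term.varsOf_rename (π : ℕ → ℕ) (t : Term) :
    ∀ j ∈ (t.rename π).varsOf, j ∈ t.varsOf.image π := by
  induction t with
  | var i =>
      intro j hj
      simp [Term.rename, Term.varsOf] at hj ⊢
      exact hj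
  | zero => intro j hj; simp [Term.rename, Term.varsOf] at hj
  | succ t ih => intro j hj; exact ih j hj
  | add t u iht ihu =>
      intro j hj
      simp only [Term.rename, Term.varsOf, Finset.mem_union] at hj
      simp only [Term.varsOf]
      rcases hj with h | h
      · exact Finset.image_subset_image Finset.subset_union_left (iht j h)
      · exact Finset.image_subset_image Finset.subset_union_right (ihu j h)
  | mul t u iht ihu =>
      intro j hj
      simp only [Term.rename, Term.varsOf, Finset.mem_union] at hj
      simp only [Term.varsOf]
      rcases hj with h | h
      · exact Finset.image_subset_image Finset.subset_union_left (iht j h)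
      · exact Finset.image_subset_image Finset.subset_union_right (ihu j h)
lemma Formula.allVars_rename (π : ℕ → ℕ) (φ : Formula) :
    ∀ j ∈ (φ.rename π).allVars, j ∈ φ.allVars.image π := by
  induction φ with
  | eq t u =>
      intro j hj
      simp only [Formula.rename, Formula.allVars, Finset.mem_union] at hj
      simp only [Formula.allVars]
      rcases hj with h | h
      · exact Finset.image_subset_image Finset.subset_union_left (Term.varsOf_rename π t j h)
      · exact Finset.image_subset_image Finset.subset_union_right (Term.varsOf_rename π u j h)
  | lt t u =>
      intro j hj
      simp only [Formula.rename, Formula.allVars, Finset.mem_union] at hj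
      simp only [Formula.allVars]
      rcases hj with h | h
      · exact Finset.image_subset_image Finset.subset_union_left (Term.varsOf_rename π t j h)
      · exact Finset.image_subset_image Finset.subset_union_right (Term.varsOf_rename π u j h)
  | not φ ih => intro j hj; exact ih j hj
  | and φ ψ ihφ ihψ =>
      intro j hj
      simp only [Formula.rename, Formula.allVars, Finset.mem_union] at hj
      simp only [Formula.allVars]
      rcases hj with h | h
      · exact Finset.image_subset_image Finset.subset_union_left (ihφ j h)
      · exact Finset.image_subset_image Finset.subset_union_right (ihψ j h)
  | or φ ψ ihφ ihψ =>
      intro j hj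
      simp only [Formula.rename, Formula.allVars, Finset.mem_union] at hj
      simp only [Formula.allVars]
      rcases hj with h | h
      · exact Finset.image_subset_image Finset.subset_union_left (ihφ j h)
      · exact Finset.image_subset_image Finset.subset_union_right (ihψ j h)
  | imp φ ψ ihφ ihψ =>
      intro j hj
      simp only [Formula.rename, Formula.allVars, Finset.mem_union] at hj
      simp only [Formula.allVars]
      rcases hj with h | h
      · exact Finset.image_subset_image Finset.subset_union_left (ihφ j h)
      · exact Finset.image_subset_image Finset.subset_union_right (ihψ j h)
  | all i φ ih =>
      intro j hj
      simp only [Formula.rename, Formula.allVars, Finset.mem_insert] at hj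
      simp only [Formula.allVars]
      rcases hj with rfl | h
      · exact Finset.mem_image_of_mem π (Finset.mem_insert_self i _)
      · exact Finset.image_subset_image (Finset.subset_insert i _) (ih j h)
  | ex i φ ih =>
      intro j hj
      simp only [Formula.rename, Formula.allVars, Finset.mem_insert] at hj
      simp only [Formula.allVars]
      rcases hj with rfl | h
      · exact Finset.mem_image_of_mem π (Finset.mem_insert_self i _)
      · exact Finset.image_subset_image (Finset.subset_insert i _) (ih j h)
lemma Formula.freeVars_rename (π : ℕ → ℕ) (φ : Formula) :
    ∀ j ∈ (φ.rename π).freeVars, j ∈ φ.freeVars.image π := by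
  induction φ with
  | eq t u =>
      intro j hj
      simp only [Formula.rename, Formula.freeVars, Finset.mem_union] at hj
      simp only [Formula.freeVars]
      rcases hj with h | h
      · exact Finset.image_subset_image Finset.subset_union_left (Term.varsOf_rename π t j h)
      · exact Finset.image_subset_image Finset.subset_union_right (Term.varsOf_rename π u j h)
  | lt t u =>
      intro j hj
      simp only [Formula.rename, Formula.freeVars, Finset.mem_union] at hj
      simp only [Formula.freeVars]
      rcases hj with h | h
      · exact Finset.image_subset_image Finset.subset_union_left (Term.varsOf_rename π t j h)
      · exact Finset.image_subset_image Finset.subset_union_right (Term.varsOf_rename π u j h)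
  | not φ ih => intro j hj; exact ih j hj
  | and φ ψ ihφ ihψ =>
      intro j hj
      simp only [Formula.rename, Formula.freeVars, Finset.mem_union] at hj
      simp only [Formula.freeVars]
      rcases hj with h | h
      · exact Finset.image_subset_image Finset.subset_union_left (ihφ j h)
      · exact Finset.image_subset_image Finset.subset_union_right (ihψ j h)
  | or φ ψ ihφ ihψ =>
      intro j hj
      simp only [Formula.rename, Formula.freeVars, Finset.mem_union] at hj
      simp only [Formula.freeVars]
      rcases hj with h | h
      · exact Finset.image_subset_image Finset.subset_union_left (ihφ j h)
      · exact Finset.image_subset_image Finset.subset_union_right (ihψ j h)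
  | imp φ ψ ihφ ihψ =>
      intro j hj
      simp only [Formula.rename, Formula.freeVars, Finset.mem_union] at hj
      simp only [Formula.freeVars]
      rcases hj with h | h
      · exact Finset.image_subset_image Finset.subset_union_left (ihφ j h)
      · exact Finset.image_subset_image Finset.subset_union_right (ihψ j h)
  | all i φ ih =>
      intro j hj
      simp only [Formula.rename, Formula.freeVars, Finset.mem_erase] at hj
      obtain ⟨hji, hmem⟩ := hj
      obtain ⟨y, hy, rfl⟩ := Finset.mem_image.mp (ih j hmem)
      have hyi : y ≠ i := fun e => hji (by rw [e])
      simp only [Formula.freeVars, Finset.mem_image]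
      exact ⟨y, Finset.mem_erase.mpr ⟨hyi, hy⟩, rfl⟩
  | ex i φ ih =>
      intro j hj
      simp only [Formula.rename, Formula.freeVars, Finset.mem_erase] at hj
      obtain ⟨hji, hmem⟩ := hj
      obtain ⟨y, hy, rfl⟩ := Finset.mem_image.mp (ih j hmem)
      have hyi : y ≠ i := fun e => hji (by rw [e])
      simp only [Formula.freeVars, Finset.mem_image]
      exact ⟨y, Finset.mem_erase.mpr ⟨hyi, hy⟩, rfl⟩
lemma names_rename (T : Set Formula) (μ : Formula) (m : ℕ) (π : ℕ → ℕ)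
    (hinj : Function.Injective π) (h0 : π 0 = 0) (h : Names T μ m) :
    Names T (μ.rename π) m := by
  obtain ⟨hfv, hpr⟩ := h
  constructor
  · intro j hj
    obtain ⟨y, hy, rfl⟩ := Finset.mem_image.mp (Formula.freeVars_rename π μ j hj)
    have hy0 : y = 0 := by simpa using hfv hy
    subst hy0
    simpa using h0
  · intro M v hT
    have H := hpr M v hT
    simp only [Formula.Realize, Formula.iffF] at H ⊢
    intro a
    have H' := H a
    have key : Formula.Realize M (Function.update v 0 a) (μ.rename π) ↔
        Formula.Realize M (Function.update v 0 a) μ := by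
      rw [Formula.realize_rename M π hinj μ]
      apply Formula.realize_congr
      intro j hj
      have hj0 : j = 0 := by simpa using hfv hj
      subst hj0
      show Function.update v 0 a (π 0) = Function.update v 0 a 0
      rw [h0]
    tauto

lemma brel_of_nameable {T : Set Formula} {g : ℕ → ℕ} (hg : GoodBound g) {m j : ℕ}
    (h : Nameable T j m) : BRel T g m j := by
  obtain ⟨μ, hlen, hnames⟩ := h
  have hj1 : 1 ≤ μ.length := Formula.length_pos μ
  set S : Finset ℕ := μ.allVars.erase 0 with hS
  set L : List ℕ := S.sort (· ≤ ·) with hL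
  have hcard : S.card ≤ μ.length :=
    le_trans (Finset.card_le_card (Finset.erase_subset _ _)) (Formula.card_allVars_le μ)
  have hLlen : L.length = S.card := Finset.length_sort _
  set π : ℕ → ℕ := fun x => if x = 0 then 0 else if x ∈ L then 1 + L.idxOf x else x + j
    with hπ
  have hmemL : ∀ x, x ∈ L ↔ (x ≠ 0 ∧ x ∈ μ.allVars) := by
    intro x
    rw [hL, Finset.mem_sort, hS, Finset.mem_erase]
  have hidx : ∀ x ∈ L, 1 + L.idxOf x ≤ μ.length := by
    intro x hx
    have := List.idxOf_lt_length_iff.mpr hx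
    omega
  have hrange : ∀ x ∈ μ.allVars, π x < j := by
    intro x hx
    by_cases h0 : x = 0
    · simp [hπ, h0]; omega
    · have hxL : x ∈ L := (hmemL x).mpr ⟨h0, hx⟩
      simp only [hπ, if_neg h0, if_pos hxL]
      have := hidx x hxL
      omega
  have hinj : Function.Injective π := by
    intro x y hxy
    simp only [hπ] at hxy
    by_cases hx0 : x = 0 <;> by_cases hy0 : y = 0
    · rw [hx0, hy0]
    · rw [if_pos hx0, if_neg hy0] at hxy
      by_cases hyL : y ∈ L
      · rw [if_pos hyL] at hxy; omega
      · rw [if_neg hyL] at hxy; omega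
    · rw [if_neg hx0, if_pos hy0] at hxy
      by_cases hxL : x ∈ L
      · rw [if_pos hxL] at hxy; omega
      · rw [if_neg hxL] at hxy; omega
    · rw [if_neg hx0, if_neg hy0] at hxy
      by_cases hxL : x ∈ L <;> by_cases hyL : y ∈ L
      · rw [if_pos hxL, if_pos hyL] at hxy
        have := (List.idxOf_inj (y := y) hxL).mp (by omega)
        exact this
      · rw [if_pos hxL, if_neg hyL] at hxy
        have := hidx x hxL
        omega
      · rw [if_neg hxL, if_pos hyL] at hxy
        have := hidx y hyL
        omega
      · rw [if_neg hxL, if_neg hyL] at hxy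
        omega
  refine ⟨μ.rename π, ?_, ?_, ?_⟩
  · apply hg.2
    · intro x hx
      obtain ⟨y, hy, rfl⟩ := Finset.mem_image.mp (Formula.allVars_rename π μ x hx)
      simpa [Finset.mem_range] using hrange y hy
    · rwa [Formula.length_rename]
  · rwa [Formula.length_rename]
  · exact names_rename T μ m π hinj (by simp [hπ]) hnames
/-- **Footnote version of Boolos's theorem.** If T is a definable theory containing all
sentences i ≠ j (for distinct i, j) with Pr_T definable, then the sentence
η ≔ (∀v₀)(ψ(v₀,t) ↔ v₀ = n) is true but unprovable in T. -/
theorem boolos_footnote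
    (T : Set Formula) (hTsent : ∀ σ ∈ T, σ.IsSentence)
    (hTdef : Definable {m : ℕ | ∃ σ ∈ T, m = Formula.gnum σ})
    (hTneq : ∀ i j : ℕ, i ≠ j → Formula.not (.eq (numeral i) (numeral j)) ∈ T)
    (hdef : Definable (PrSet T))
    (g : ℕ → ℕ) (hg : GoodBound g)
    (φ : Formula) (hφ : DefinesRel φ (BRel T g)) (hφ2 : 2 ∉ φ.allVars)
    (k₂ : ℕ) (hk₂ : (psiOf φ).countFreeOcc 1 < k₂)
    (k : ℕ) (hk : k = (psiOf φ).length * k₂)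
    (n : ℕ) (hn : ¬ Nameable T (10 * (k * k)) n)
    (hleast : ∀ m < n, Nameable T (10 * (k * k)) m) :
    IsTrue (.all 0 (Formula.iffF ((psiOf φ).subst 1 (tTerm k)) (.eq v0 (numeral n)))) ∧
      ¬ Proves T
        (.all 0 (Formula.iffF ((psiOf φ).subst 1 (tTerm k)) (.eq v0 (numeral n)))) := by
  obtain ⟨hφfv, hφiff⟩ := hφ
  -- canonical realization of φ in the standard model
  have key : ∀ (v : ℕ → ℕ) (i j : ℕ), v 0 = i → v 1 = j →
      (Formula.Realize stdModel v φ ↔ BRel T g i j) := by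
    intro v i j h0 h1
    rw [hφiff i j]
    have hc1 : ∀ x ∈ (numeral j).varsOf, x ∉ (φ.subst 0 (numeral i)).allVars := by
      intro x hx; rw [numeral_varsOf] at hx; exact absurd hx (Finset.notMem_empty x)
    have hc0 : ∀ x ∈ (numeral i).varsOf, x ∉ φ.allVars := by
      intro x hx; rw [numeral_varsOf] at hx; exact absurd hx (Finset.notMem_empty x)
    have hagree : ∀ w : ℕ → ℕ,
        Formula.Realize stdModel w ((φ.subst 0 (numeral i)).subst 1 (numeral j)) ↔
          Formula.Realize stdModel v φ := by
      intro w
      rw [Formula.realize_subst stdModel _ 1 (numeral j) hc1 w,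
          Formula.realize_subst stdModel φ 0 (numeral i) hc0 _,
          numeral_val, numeral_val]
      apply Formula.realize_congr
      intro x hx
      have hx01 : x = 0 ∨ x = 1 := by
        have := hφfv hx; simpa using this
      rcases hx01 with rfl | rfl
      · simp [h0]
      · simp [h1, Function.update_of_ne (show (1:ℕ) ≠ 0 by norm_num)]
    constructor
    · intro hR
      intro w
      exact (hagree w).mpr hR
    · intro hI
      exact (hagree v).mp (hI v)
  have brel_iff : ∀ i : ℕ, BRel T g i (10 * (k * k)) ↔ Nameable T (10 * (k * k)) i := by
    intro i
    constructor
    · rintro ⟨μ, _, hl, hN⟩; exact ⟨μ, hl, hN⟩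
    · exact brel_of_nameable hg
  -- the main semantic computation
  have hψreal : ∀ (v : ℕ → ℕ) (a : ℕ),
      Formula.Realize stdModel (Function.update v 0 a) ((psiOf φ).subst 1 (tTerm k)) ↔
        a = n := by
    intro v a
    have hct : ∀ x ∈ (tTerm k).varsOf, x ∉ (psiOf φ).allVars := by
      intro x hx; rw [tTerm_varsOf] at hx; exact absurd hx (Finset.notMem_empty x)
    rw [Formula.realize_subst stdModel (psiOf φ) 1 (tTerm k) hct _, tTerm_val]
    set w : ℕ → ℕ := Function.update (Function.update v 0 a) 1 (10 * (k * k)) with hw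
    have hw0 : w 0 = a := by simp [hw, Function.update_of_ne (show (0:ℕ) ≠ 1 by norm_num)]
    have hw1 : w 1 = 10 * (k * k) := by simp [hw]
    have hA : Formula.Realize stdModel w φ ↔ Nameable T (10 * (k * k)) a := by
      rw [key w a (10 * (k * k)) hw0 hw1, brel_iff]
    have hB : ∀ b : ℕ,
        Formula.Realize stdModel (Function.update w 2 b) (φ.subst 0 v2) ↔
          Nameable T (10 * (k * k)) b := by
      intro b
      have hcv2 : ∀ x ∈ (Boolos.v2).varsOf, x ∉ φ.allVars := by
        intro x hx
        have : x = 2 := by simpa [Boolos.v2, Term.varsOf] using hx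
        subst this; exact hφ2
      rw [Formula.realize_subst stdModel φ 0 Boolos.v2 hcv2 _]
      have hv2val : Term.val stdModel (Function.update w 2 b) Boolos.v2 = b := by
        simp [Boolos.v2, Term.val]
      rw [hv2val,
        key _ b (10 * (k * k)) (by simp)
          (by simp [Function.update_of_ne (show (1:ℕ) ≠ 0 by norm_num),
                Function.update_of_ne (show (1:ℕ) ≠ 2 by norm_num), hw1]),
        brel_iff]
    have hC : ∀ b : ℕ,
        Formula.Realize stdModel (Function.update w 2 b) (Formula.lt Boolos.v2 Boolos.v0) ↔
          b < a := by
      intro b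
      simp [Formula.Realize, Boolos.v2, Boolos.v0, Term.val,
        Function.update_of_ne (show (0:ℕ) ≠ 2 by norm_num), hw0, stdModel]
    simp only [psiOf, Formula.Realize]
    constructor
    · rintro ⟨h1, h2⟩
      by_contra hne
      rcases Nat.lt_or_ge a n with h | h
      · exact h1 (hA.mpr (hleast a h))
      · have hna : n < a := lt_of_le_of_ne h (Ne.symm hne)
        exact hn ((hB n).mp (h2 n ((hC n).mpr hna)))
    · rintro rfl
      constructor
      · exact fun h => hn (hA.mp h)
      · intro b hb
        exact (hB b).mpr (hleast b ((hC b).mp hb))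
  constructor
  · -- truth
    intro v
    simp only [Formula.Realize, Formula.iffF]
    intro a
    have hψ := hψreal v a
    have he : Formula.Realize stdModel (Function.update v 0 a) (.eq Boolos.v0 (numeral n)) ↔
        a = n := by
      simp [Formula.Realize, Boolos.v0, Term.val, numeral_val]
    exact ⟨fun h => he.mpr (hψ.mp h), fun h => hψ.mpr (he.mp h)⟩
  · -- unprovability
    intro hP
    apply hn
    refine ⟨(psiOf φ).subst 1 (tTerm k), ?_, ?_, hP⟩
    · -- length bound
      have h1 := Formula.length_subst (psiOf φ) 1 (tTerm k)
      rw [tTerm_length] at h1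
      have h3 := psiOf_length φ
      have h4 := Formula.length_pos φ
      have h5 := Formula.length_pos (φ.subst 0 Boolos.v2)
      have hk₁10 : 10 ≤ (psiOf φ).length := by omega
      have hc1 : (psiOf φ).countFreeOcc 1 + 1 ≤ k₂ := hk₂
      have hkge : (psiOf φ).length ≤ k := by
        rw [hk]; exact Nat.le_mul_of_pos_right _ (by omega)
      have hc10 : 10 * (psiOf φ).countFreeOcc 1 + 10 ≤ k := by
        calc 10 * (psiOf φ).countFreeOcc 1 + 10 = 10 * ((psiOf φ).countFreeOcc 1 + 1) := by ring
        _ ≤ (psiOf φ).length * k₂ := Nat.mul_le_mul hk₁10 hc1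
        _ = k := hk.symm
      set c := (psiOf φ).countFreeOcc 1 with hc
      -- goal: length subst < 10 * (k * k)
      have hbig : 10 * ((psiOf φ).length + c * (2 * k + 15)) < 10 * (10 * (k * k)) := by
        have e1 : 10 * ((psiOf φ).length + c * (2 * k + 15)) =
            10 * (psiOf φ).length + (10 * c) * (2 * k) + 150 * c := by ring
        have e2 : (10 * c) * (2 * k) ≤ k * (2 * k) :=
          Nat.mul_le_mul_right _ (by omega)
        have e3 : 150 * c ≤ 15 * k := by omega
        have e4 : 10 * (psiOf φ).length ≤ 10 * k := by omega
        have e5 : k * (2 * k) = 2 * (k * k) := by ring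
        have e6 : 10 ≤ k := by omega
        nlinarith [e1, e2, e3, e4, e5, e6]
      omega
    · -- free variables ⊆ {0}
      have hpsifv : ∀ x ∈ (psiOf φ).freeVars, x = 0 ∨ x = 1 := by
        intro x hx
        simp only [psiOf, Formula.freeVars, Finset.mem_union] at hx
        rcases hx with h | h
        · have := hφfv h; simpa using this
        · obtain ⟨hx2, hmem⟩ := Finset.mem_erase.mp h
          rcases Finset.mem_union.mp hmem with h' | h'
          · rcases Finset.mem_union.mp h' with h'' | h''
            · exact absurd (by simpa [Boolos.v2, Term.varsOf] using h'') hx2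
            · left; simpa [Boolos.v0, Term.varsOf] using h''
          · have := Formula.freeVars_subst φ 0 Boolos.v2 x h'
            rcases Finset.mem_union.mp this with h'' | h''
            · have hin := hφfv (Finset.mem_of_mem_erase h'')
              simpa using hin
            · exact absurd (by simpa [Boolos.v2, Term.varsOf] using h'') hx2
      intro x hx
      have := Formula.freeVars_subst (psiOf φ) 1 (tTerm k) x hx
      rw [tTerm_varsOf] at this
      rcases Finset.mem_union.mp this with h | h
      · obtain ⟨hx1, hmem⟩ := Finset.mem_erase.mp h
        rcases hpsifv x hmem with rfl | rfl
        · simp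
        · exact absurd rfl hx1
      · exact absurd h (Finset.notMem_empty x)

end Boolos
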